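/- (Example 1.8, conclusion) Suppose 𝒵₀ = {ς_i, −ς_i, 2ς_i, −2ς_i : i = 1, …, d} and c_𝕜 = (√n₁, …, √n_d) where n₁, …, n_d are pairwise distinct squarefree positive integers (the vectors c_1, …, c_{𝕜−1} ∈ ℝ^d being arbitrary). Then 𝒵_∞ = ℤ^d \ {0}, and in particular the Hörmander-type condition (Condition 1.1) holds: ℤ^d \ 𝒵_∞ ⊆ A^⊥. -/

import Mathlib

open scoped BigOperators

/-- Euclidean pairing `⟨c, k⟩ = ∑ i, c i * k i` between a real vector and an
integer vector. -/
noncomputable def pairing {d : ℕ} (c : Fin d → ℝ) (k : Fin d → ℤ) : ℝ :=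
  ∑ i, c i * (k i : ℝ)

/-- `A^⊥ = {k ∈ ℤ^d : ⟨c_j, k⟩ = 0 for all j = 1, …, 𝕜}`. -/
def Aperp {d : ℕ} (kk : ℕ) (c : ℕ → Fin d → ℝ) : Set (Fin d → ℤ) :=
  {k | ∀ j : ℕ, 1 ≤ j → j ≤ kk → pairing (c j) k = 0}

/-- The set `𝕃` of sums of exactly `kk - 1` elements of `Z0`. -/
def Lset {d : ℕ} (kk : ℕ) (Z0 : Set (Fin d → ℤ)) : Set (Fin d → ℤ) :=
  {l | ∃ f : Fin (kk - 1) → (Fin d → ℤ), (∀ i, f i ∈ Z0) ∧ l = ∑ i, f i}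

/-- The recursively defined sets `𝒵ₙ`. -/
def Zn {d : ℕ} (kk : ℕ) (ck : Fin d → ℝ) (Z0 : Set (Fin d → ℤ)) :
    ℕ → Set (Fin d → ℤ)
  | 0 => Z0
  | n + 1 =>
      {x | ∃ κ ∈ Zn kk ck Z0 n, ∃ l ∈ Lset kk Z0, x = κ + l ∧ pairing ck x ≠ 0}

/-- `𝒵_∞ = ⋃ n, 𝒵ₙ`. -/
def Zinf {d : ℕ} (kk : ℕ) (ck : Fin d → ℝ) (Z0 : Set (Fin d → ℤ)) :
    Set (Fin d → ℤ) :=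
  ⋃ n : ℕ, Zn kk ck Z0 n

/-- The standard noise set `𝒵₀ = {ς_i, −ς_i, 2ς_i, −2ς_i : i = 1, …, d}`,
where `ς_i` is the `i`-th standard basis vector. -/
def stdZ0 (d : ℕ) : Set (Fin d → ℤ) :=
  {k | ∃ i : Fin d,
    k = Pi.single i 1 ∨ k = -Pi.single i 1 ∨ k = Pi.single i 2 ∨ k = -Pi.single i 2}



/-- The subfield of `ℝ` generated by the square roots of the elements of `S`. -/
noncomputable def Ksqrt (S : Finset ℕ) : Subfield ℝ :=
  Subfield.closure ((fun p : ℕ => Real.sqrt p) '' (S : Set ℕ))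

lemma sqrt_mem_Ksqrt_of_mem {S : Finset ℕ} {q : ℕ} (hq : q ∈ S) :
    Real.sqrt q ∈ Ksqrt S :=
  Subfield.subset_closure ⟨q, by simpa using hq, rfl⟩

/-- Every element of `Ksqrt (insert p S)` has the form `a + b * √p` with `a, b ∈ Ksqrt S`. -/
lemma Ksqrt_insert_rep {S : Finset ℕ} {p : ℕ} {x : ℝ}
    (hx : x ∈ Ksqrt (insert p S)) :
    ∃ a ∈ Ksqrt S, ∃ b ∈ Ksqrt S, x = a + b * Real.sqrt p := by
  by_cases hp : Real.sqrt p ∈ Ksqrt S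
  · refine ⟨x, ?_, 0, zero_mem _, by ring⟩
    have hle : Ksqrt (insert p S) ≤ Ksqrt S := by
      apply Subfield.closure_le.2
      rintro _ ⟨q, hq, rfl⟩
      simp only [Finset.coe_insert, Set.mem_insert_iff] at hq
      rcases hq with rfl | hq
      · exact hp
      · exact sqrt_mem_Ksqrt_of_mem hq
    exact hle hx
  · -- representation set is closed under field operations
    have hps : (0:ℝ) ≤ (p:ℝ) := by positivity
    have hsq : Real.sqrt p * Real.sqrt p = (p:ℝ) := Real.mul_self_sqrt hps
    have key : ∀ y : ℝ, y ∈ Ksqrt S → ∀ z : ℝ, z ∈ Ksqrt S →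
        y + z * Real.sqrt p ≠ 0 → y - z * Real.sqrt p ≠ 0 := by
      intro y hy z hz hne h0
      rcases eq_or_ne z 0 with rfl | hz0
      · apply hne; rw [zero_mul] at h0 ⊢
        simpa using h0
      · apply hp
        have : Real.sqrt p = y / z := by
          field_simp
          linarith [sub_eq_zero.mp h0]
        rw [this]; exact div_mem hy hz
    refine Subfield.closure_induction (p := fun x _ =>
        ∃ a ∈ Ksqrt S, ∃ b ∈ Ksqrt S, x = a + b * Real.sqrt p) ?_ ?_ ?_ ?_ ?_ ?_ hx
    · rintro _ ⟨q, hq, rfl⟩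
      simp only [Finset.coe_insert, Set.mem_insert_iff] at hq
      rcases hq with rfl | hq
      · exact ⟨0, zero_mem _, 1, one_mem _, by ring⟩
      · exact ⟨Real.sqrt q, sqrt_mem_Ksqrt_of_mem hq, 0, zero_mem _, by ring⟩
    · exact ⟨1, one_mem _, 0, zero_mem _, by ring⟩
    · rintro x y _ _ ⟨a, ha, b, hb, rfl⟩ ⟨a', ha', b', hb', rfl⟩
      exact ⟨a + a', add_mem ha ha', b + b', add_mem hb hb', by ring⟩
    · rintro x _ ⟨a, ha, b, hb, rfl⟩
      exact ⟨-a, neg_mem ha, -b, neg_mem hb, by ring⟩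
    · rintro x _ ⟨a, ha, b, hb, rfl⟩
      rcases eq_or_ne (a + b * Real.sqrt p) 0 with h0 | h0
      · exact ⟨0, zero_mem _, 0, zero_mem _, by rw [h0]; simp⟩
      · have h1 : a - b * Real.sqrt p ≠ 0 := key a ha b hb h0
        have hD : a ^ 2 - b ^ 2 * p ≠ 0 := by
          have : a ^ 2 - b ^ 2 * (p:ℝ) = (a + b * Real.sqrt p) * (a - b * Real.sqrt p) := by
            have := hsq; nlinarith [hsq]
          rw [this]; exact mul_ne_zero h0 h1
        refine ⟨a / (a ^ 2 - b ^ 2 * p), div_mem ha (by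
            exact sub_mem (pow_mem ha 2) (mul_mem (pow_mem hb 2) (natCast_mem _ p))),
          -b / (a ^ 2 - b ^ 2 * p), div_mem (neg_mem hb) (by
            exact sub_mem (pow_mem ha 2) (mul_mem (pow_mem hb 2) (natCast_mem _ p))), ?_⟩
        have hfac : (a - b * Real.sqrt p) * (a + b * Real.sqrt p) = a ^ 2 - b ^ 2 * p := by
          linear_combination (-(b ^ 2)) * hsq
        have : a / (a ^ 2 - b ^ 2 * p) + -b / (a ^ 2 - b ^ 2 * p) * Real.sqrt p
            = (a - b * Real.sqrt p) / (a ^ 2 - b ^ 2 * p) := by ring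
        rw [this]
        have hmul : (a - b * Real.sqrt p) / (a ^ 2 - b ^ 2 * (p:ℝ)) * (a + b * Real.sqrt p) = 1 := by
          rw [div_mul_eq_mul_div, hfac, div_self hD]
        exact (eq_inv_of_mul_eq_one_left hmul).symm
    · rintro x y _ _ ⟨a, ha, b, hb, rfl⟩ ⟨a', ha', b', hb', rfl⟩
      refine ⟨a * a' + b * b' * p, ?_, a * b' + b * a', ?_, by linear_combination b * b' * hsq⟩
      · exact add_mem (mul_mem ha ha') (mul_mem (mul_mem hb hb') (natCast_mem _ p))
      · exact add_mem (mul_mem ha hb') (mul_mem hb ha')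
/-- Key field-theoretic lemma: if `m` is squarefree with a prime factor outside `S`,
then `√m ∉ Ksqrt S`. -/
lemma sqrt_not_mem_Ksqrt :
    ∀ S : Finset ℕ, (∀ q ∈ S, Nat.Prime q) → ∀ m : ℕ, Squarefree m →
      (∃ q : ℕ, q.Prime ∧ q ∣ m ∧ q ∉ S) → Real.sqrt m ∉ Ksqrt S := by
  intro S
  induction S using Finset.induction_on with
  | empty =>
    intro _ m hm ⟨q, hq, hqm, _⟩ hmem
    have hm1 : m ≠ 1 := by
      rintro rfl
      exact hq.one_lt.ne' (Nat.eq_one_of_dvd_one hqm)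
    have : ¬ IsSquare m := by
      rintro ⟨r, hr⟩
      exact hm1 (by rw [hr, Nat.isUnit_iff.mp (hm r (hr ▸ dvd_refl m))])
    have hirr : Irrational (Real.sqrt m) := irrational_sqrt_natCast_iff.mpr this
    have : Real.sqrt m ∈ Subfield.closure (∅ : Set ℝ) := by
      simpa [Ksqrt] using hmem
    have hrat := Subfield.mem_closure.mp this ((Rat.castHom ℝ).fieldRange) (Set.empty_subset _)
    obtain ⟨r, hr⟩ := hrat
    exact hirr ⟨r, hr⟩
  | @insert p S hpS ih =>
    intro hprime m hm ⟨q, hq, hqm, hqS⟩ hmem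
    have hp : Nat.Prime p := hprime p (Finset.mem_insert_self _ _)
    have hSprime : ∀ r ∈ S, Nat.Prime r := fun r hr => hprime r (Finset.mem_insert_of_mem hr)
    have ihS := ih hSprime
    have hpnotS : Real.sqrt p ∉ Ksqrt S :=
      ihS p hp.squarefree ⟨p, hp, dvd_refl p, hpS⟩
    have hqp : q ≠ p := fun h => hqS (h ▸ Finset.mem_insert_self _ _)
    have hqS' : q ∉ S := fun h => hqS (Finset.mem_insert_of_mem h)
    obtain ⟨a, ha, b, hb, heq⟩ := Ksqrt_insert_rep hmem
    have hps : (0:ℝ) ≤ (p:ℝ) := by positivity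
    have hsq : Real.sqrt p * Real.sqrt p = (p:ℝ) := Real.mul_self_sqrt hps
    have hmsq : Real.sqrt m * Real.sqrt m = (m:ℝ) := Real.mul_self_sqrt (by positivity)
    have key : (m:ℝ) = a ^ 2 + 2 * a * b * Real.sqrt p + b ^ 2 * p := by
      have := congrArg (fun t => t * t) heq
      rw [hmsq] at this
      rw [this]; linear_combination (b^2) * hsq
    by_cases hb0 : b = 0
    · -- √m = a ∈ Ksqrt S
      apply ihS m hm ⟨q, hq, hqm, hqS'⟩
      rw [heq, hb0, zero_mul, add_zero]; exact ha
    by_cases ha0 : a = 0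
    · -- √m = b √p
      have heq' : Real.sqrt m = b * Real.sqrt p := by rw [heq, ha0, zero_add]
      by_cases hpm : p ∣ m
      · obtain ⟨m₀, rfl⟩ := hpm
        have hm₀sf : Squarefree m₀ := hm.squarefree_of_dvd ⟨p, by ring⟩
        have hpm₀ : ¬ p ∣ m₀ := by
          rintro ⟨t, ht⟩
          exact hp.not_isUnit (hm p ⟨t, by rw [ht]; ring⟩)
        have hqm₀ : q ∣ m₀ := (Nat.Coprime.dvd_of_dvd_mul_left
          (Nat.coprime_primes hq hp |>.mpr hqp) hqm)
        have hsplit : Real.sqrt (p * m₀ : ℕ) = Real.sqrt p * Real.sqrt m₀ := by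
          push_cast
          exact Real.sqrt_mul hps _
        have hppos : (0:ℝ) < Real.sqrt p := Real.sqrt_pos.mpr (by exact_mod_cast hp.pos)
        have : Real.sqrt m₀ = b := by
          have h' := heq'
          rw [hsplit] at h'
          exact mul_left_cancel₀ (ne_of_gt hppos) (h'.trans (mul_comm b _))
        apply ihS m₀ hm₀sf ⟨q, hq, hqm₀, hqS'⟩
        rw [this]; exact hb
      · -- p ∤ m : √(m p) = b p ∈ Ksqrt S
        have hcop : Nat.Coprime m p := (Nat.coprime_comm.mp (hp.coprime_iff_not_dvd.mpr hpm))
        have hmpsf : Squarefree (m * p) := (Nat.squarefree_mul hcop).mpr ⟨hm, hp.squarefree⟩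
        have hsplit : Real.sqrt (m * p : ℕ) = Real.sqrt m * Real.sqrt p := by
          push_cast
          exact Real.sqrt_mul (by positivity) _
        have : Real.sqrt (m * p : ℕ) = b * p := by
          rw [hsplit, heq', mul_assoc, hsq]
        apply ihS (m * p) hmpsf ⟨q, hq, Dvd.dvd.mul_right hqm p, hqS'⟩
        rw [this]
        exact mul_mem hb (natCast_mem _ p)
    · -- a ≠ 0, b ≠ 0 : solve for √p
      apply hpnotS
      have h2ab : (2 : ℝ) * a * b ≠ 0 := by
        simp [ha0, hb0]
      have : Real.sqrt p = ((m:ℝ) - a ^ 2 - b ^ 2 * p) / (2 * a * b) := by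
        rw [eq_div_iff h2ab]
        linarith [key]
      rw [this]
      exact div_mem (sub_mem (sub_mem (natCast_mem _ m) (pow_mem ha 2))
        (mul_mem (pow_mem hb 2) (natCast_mem _ p)))
        (mul_mem (mul_mem (by exact_mod_cast natCast_mem (Ksqrt S) 2) ha) hb)
lemma sqrt_mem_Ksqrt (S : Finset ℕ) :
    ∀ m : ℕ, 0 < m → (∀ q : ℕ, q.Prime → q ∣ m → q ∈ S) → Real.sqrt m ∈ Ksqrt S := by
  intro m
  induction m using Nat.strong_induction_on with
  | _ m ih =>
    intro hm hfac
    rcases eq_or_lt_of_le (show 1 ≤ m from hm) with h1 | h1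
    · rw [← h1]; simpa using one_mem (Ksqrt S)
    · obtain ⟨q, hq, hqm⟩ := Nat.exists_prime_and_dvd (by omega : m ≠ 1)
      obtain ⟨m₀, rfl⟩ := hqm
      have hm₀pos : 0 < m₀ := Nat.pos_of_ne_zero fun h => by simp [h] at hm
      have hm₀lt : m₀ < q * m₀ := (lt_mul_iff_one_lt_left hm₀pos).mpr hq.one_lt
      have hsplit : Real.sqrt (q * m₀ : ℕ) = Real.sqrt q * Real.sqrt m₀ := by
        push_cast
        exact Real.sqrt_mul (by positivity) _
      rw [hsplit]
      refine mul_mem (sqrt_mem_Ksqrt_of_mem (hfac q hq ⟨m₀, rfl⟩)) ?_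
      exact ih m₀ hm₀lt hm₀pos fun r hr hrm => hfac r hr (hrm.mul_left q)

/-- Linear independence of square roots of distinct squarefree numbers with prime
factors in `S`. -/
lemma sqrt_linIndep :
    ∀ S : Finset ℕ, (∀ q ∈ S, Nat.Prime q) →
      ∀ (T : Finset ℕ) (k : ℕ → ℤ),
        (∀ m ∈ T, Squarefree m ∧ 0 < m ∧ ∀ q : ℕ, q.Prime → q ∣ m → q ∈ S) →
        (∑ m ∈ T, (k m : ℝ) * Real.sqrt m) = 0 → ∀ m ∈ T, k m = 0 := by
  intro S
  induction S using Finset.induction_on with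
  | empty =>
    intro _ T k hT hsum m hmT
    have hTone : ∀ m ∈ T, m = 1 := by
      intro m hm
      obtain ⟨hsf, hpos, hfac⟩ := hT m hm
      by_contra hne
      obtain ⟨q, hq, hqm⟩ := Nat.exists_prime_and_dvd hne
      exact absurd (hfac q hq hqm) (Finset.notMem_empty q)
    rcases Finset.subset_singleton_iff.mp (fun x hx => by
        rw [hTone x hx]; exact Finset.mem_singleton_self 1) with h | h
    · exact absurd hmT (h ▸ Finset.notMem_empty m)
    · have hm1 : m = 1 := hTone m hmT
      rw [h] at hsum
      simp only [Finset.sum_singleton, Nat.cast_one, Real.sqrt_one, mul_one] at hsum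
      rw [hm1]
      exact_mod_cast hsum
  | @insert p S hpS ih =>
    intro hprime T k hT hsum
    have hp : Nat.Prime p := hprime p (Finset.mem_insert_self _ _)
    have hSprime : ∀ r ∈ S, Nat.Prime r := fun r hr => hprime r (Finset.mem_insert_of_mem hr)
    set T₁ := T.filter (fun m => ¬ p ∣ m) with hT₁
    set T₂ := T.filter (fun m => p ∣ m) with hT₂
    set T₂' := T₂.image (· / p) with hT₂'
    -- facts about members
    have hmemT₂ : ∀ m ∈ T₂, p ∣ m ∧ m ∈ T := fun m hm => by
      rw [hT₂, Finset.mem_filter] at hm; exact ⟨hm.2, hm.1⟩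
    have hrecover : ∀ m ∈ T₂, p * (m / p) = m := fun m hm =>
      Nat.mul_div_cancel' (hmemT₂ m hm).1
    have hT₂'cond : ∀ m' ∈ T₂', Squarefree m' ∧ 0 < m' ∧
        ∀ q : ℕ, q.Prime → q ∣ m' → q ∈ S := by
      intro m' hm'
      rw [hT₂', Finset.mem_image] at hm'
      obtain ⟨m, hm, rfl⟩ := hm'
      obtain ⟨hpd, hmT⟩ := hmemT₂ m hm
      obtain ⟨hsf, hpos, hfac⟩ := hT m hmT
      have hd : m / p ∣ m := Nat.div_dvd_of_dvd hpd
      refine ⟨hsf.squarefree_of_dvd hd, Nat.div_pos (Nat.le_of_dvd hpos hpd) hp.pos, ?_⟩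
      intro q hq hqd
      have hqm : q ∣ m := hqd.trans hd
      have hqins := hfac q hq hqm
      rcases Finset.mem_insert.mp hqins with rfl | h
      · exfalso
        have : q * q ∣ m := by
          rw [← hrecover m hm]
          exact mul_dvd_mul_left q hqd
        exact hq.not_isUnit (hsf q this)
      · exact h
    have hT₁cond : ∀ m ∈ T₁, Squarefree m ∧ 0 < m ∧
        ∀ q : ℕ, q.Prime → q ∣ m → q ∈ S := by
      intro m hm
      rw [hT₁, Finset.mem_filter] at hm
      obtain ⟨hsf, hpos, hfac⟩ := hT m hm.1
      refine ⟨hsf, hpos, fun q hq hqd => ?_⟩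
      rcases Finset.mem_insert.mp (hfac q hq hqd) with rfl | h
      · exact absurd hqd hm.2
      · exact h
    -- split the sum
    have hA : (∑ m ∈ T₁, (k m : ℝ) * Real.sqrt m) ∈ Ksqrt S := by
      refine Subfield.sum_mem _ fun m hm => ?_
      obtain ⟨hsf, hpos, hfac⟩ := hT₁cond m hm
      exact mul_mem (intCast_mem _ _) (sqrt_mem_Ksqrt S m hpos hfac)
    have hB : (∑ m ∈ T₂, (k m : ℝ) * Real.sqrt (m / p : ℕ)) ∈ Ksqrt S := by
      refine Subfield.sum_mem _ fun m hm => ?_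
      have hm' : (m / p : ℕ) ∈ T₂' := Finset.mem_image_of_mem _ hm
      obtain ⟨hsf, hpos, hfac⟩ := hT₂'cond _ hm'
      exact mul_mem (intCast_mem _ _) (sqrt_mem_Ksqrt S _ hpos hfac)
    have hsplit2 : (∑ m ∈ T₂, (k m : ℝ) * Real.sqrt m)
        = Real.sqrt p * ∑ m ∈ T₂, (k m : ℝ) * Real.sqrt (m / p : ℕ) := by
      rw [Finset.mul_sum]
      refine Finset.sum_congr rfl fun m hm => ?_
      have h1 : Real.sqrt m = Real.sqrt p * Real.sqrt (m / p : ℕ) := by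
        conv_lhs => rw [← hrecover m hm]
        push_cast
        exact Real.sqrt_mul (by positivity) _
      rw [h1]; ring
    have hkey : (∑ m ∈ T₁, (k m : ℝ) * Real.sqrt m)
        + Real.sqrt p * (∑ m ∈ T₂, (k m : ℝ) * Real.sqrt (m / p : ℕ)) = 0 := by
      rw [← hsplit2]
      rw [← Finset.sum_filter_add_sum_filter_not T (fun m => p ∣ m)
        (fun m => (k m : ℝ) * Real.sqrt m)] at hsum
      rw [← hT₁, ← hT₂] at hsum
      linarith [hsum]
    have hB0 : (∑ m ∈ T₂, (k m : ℝ) * Real.sqrt (m / p : ℕ)) = 0 := by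
      by_contra hB0
      apply sqrt_not_mem_Ksqrt S hSprime p hp.squarefree ⟨p, hp, dvd_refl p, hpS⟩
      have heq : Real.sqrt p = (-(∑ m ∈ T₁, (k m : ℝ) * Real.sqrt m))
          / (∑ m ∈ T₂, (k m : ℝ) * Real.sqrt (m / p : ℕ)) := by
        rw [eq_div_iff hB0]
        linarith [hkey]
      rw [heq]
      exact div_mem (neg_mem hA) hB
    have hA0 : (∑ m ∈ T₁, (k m : ℝ) * Real.sqrt m) = 0 := by
      rw [hB0, mul_zero, add_zero] at hkey
      exact hkey
    have hinj : ∀ x ∈ T₂, ∀ y ∈ T₂, x / p = y / p → x = y := by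
      intro x hx y hy hxy
      rw [← hrecover x hx, ← hrecover y hy, hxy]
    have hBimage : (∑ m' ∈ T₂', ((k (p * m') : ℤ) : ℝ) * Real.sqrt m') = 0 := by
      rw [hT₂', Finset.sum_image hinj]
      rw [← hB0]
      refine Finset.sum_congr rfl fun m hm => by rw [hrecover m hm]
    have hk₁ := ih hSprime T₁ k hT₁cond hA0
    have hk₂ := ih hSprime T₂' (fun m' => k (p * m')) hT₂'cond hBimage
    intro m hmT
    by_cases hpd : p ∣ m
    · have hm₂ : m ∈ T₂ := by rw [hT₂, Finset.mem_filter]; exact ⟨hmT, hpd⟩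
      have := hk₂ (m / p) (Finset.mem_image_of_mem _ hm₂)
      simpa only [hrecover m hm₂] using this
    · exact hk₁ m (by rw [hT₁, Finset.mem_filter]; exact ⟨hmT, hpd⟩)
/-- Square roots of distinct squarefree positive integers are linearly independent
over `ℤ`. -/
lemma sqrt_comb_ne_zero {d : ℕ} (n : Fin d → ℕ)
    (hpos : ∀ i, 0 < n i) (hsf : ∀ i, Squarefree (n i))
    (hinj : Function.Injective n) (k : Fin d → ℤ) (hk : k ≠ 0) :
    (∑ i, Real.sqrt (n i) * (k i : ℝ)) ≠ 0 := by
  intro h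
  set T : Finset ℕ := Finset.image n Finset.univ with hT
  set S : Finset ℕ := T.biUnion Nat.primeFactors with hS
  have hSprime : ∀ q ∈ S, Nat.Prime q := by
    intro q hq
    rw [hS, Finset.mem_biUnion] at hq
    obtain ⟨m, _, hqm⟩ := hq
    exact Nat.prime_of_mem_primeFactors hqm
  set K : ℕ → ℤ := fun m => ∑ i ∈ Finset.univ.filter (fun i => n i = m), k i with hK
  have hTcond : ∀ m ∈ T, Squarefree m ∧ 0 < m ∧ ∀ q : ℕ, q.Prime → q ∣ m → q ∈ S := by
    intro m hm
    rw [hT, Finset.mem_image] at hm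
    obtain ⟨i, _, rfl⟩ := hm
    refine ⟨hsf i, hpos i, fun q hq hqd => ?_⟩
    rw [hS, Finset.mem_biUnion]
    exact ⟨n i, Finset.mem_image_of_mem _ (Finset.mem_univ i),
      Nat.mem_primeFactors.mpr ⟨hq, hqd, (hpos i).ne'⟩⟩
  have hsum : (∑ m ∈ T, (K m : ℝ) * Real.sqrt m) = 0 := by
    have : (∑ m ∈ T, (K m : ℝ) * Real.sqrt m)
        = ∑ m ∈ T, ∑ i ∈ Finset.univ.filter (fun i => n i = m), (k i : ℝ) * Real.sqrt (n i) := by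
      refine Finset.sum_congr rfl fun m _ => ?_
      rw [hK]
      push_cast
      rw [Finset.sum_mul]
      refine Finset.sum_congr rfl fun i hi => ?_
      rw [Finset.mem_filter] at hi
      rw [hi.2]
    rw [this, Finset.sum_fiberwise_of_maps_to
      (fun i _ => Finset.mem_image_of_mem n (Finset.mem_univ i))]
    rw [← h]
    exact Finset.sum_congr rfl fun i _ => mul_comm _ _
  have hzero := sqrt_linIndep S hSprime T K hTcond hsum
  apply hk
  funext j
  have hKj := hzero (n j) (Finset.mem_image_of_mem n (Finset.mem_univ j))
  have hfilter : Finset.univ.filter (fun i => n i = n j) = {j} := by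
    ext i
    simp [hinj.eq_iff]
  rw [hK] at hKj
  simp only [hfilter, Finset.sum_singleton] at hKj
  exact hKj
lemma aux_sum_single {d : ℕ} (i : Fin d) :
    ∀ r : ℕ, ∃ f : Fin (r + 1) → (Fin d → ℤ),
      (∀ j, f j ∈ stdZ0 d) ∧ (∑ j, f j) = Pi.single i 1 := by
  intro r
  induction r using Nat.strong_induction_on with
  | _ r ih =>
    match r with
    | 0 =>
      refine ⟨fun _ => Pi.single i 1, fun j => ⟨i, Or.inl rfl⟩, ?_⟩
      simp
    | 1 =>
      refine ⟨Fin.cons (Pi.single i 2) (fun _ : Fin 1 => -Pi.single i 1), ?_, ?_⟩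
      · intro j
        induction j using Fin.cases with
        | zero => exact ⟨i, Or.inr (Or.inr (Or.inl (Fin.cons_zero _ _)))⟩
        | succ j' => exact ⟨i, Or.inr (Or.inl (Fin.cons_succ _ _ _))⟩
      · rw [Fin.sum_cons, Fin.sum_univ_one]
        have : (2 : ℤ) = 1 + 1 := by norm_num
        rw [this, Pi.single_add]
        abel
    | (s + 2) =>
      obtain ⟨g, hg, hsum⟩ := ih s (by omega)
      refine ⟨Fin.cons (Pi.single i 1) (Fin.cons (-Pi.single i 1) g), ?_, ?_⟩
      · intro j
        induction j using Fin.cases with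
        | zero => exact ⟨i, Or.inl rfl⟩
        | succ j' =>
          induction j' using Fin.cases with
          | zero => exact ⟨i, Or.inr (Or.inl rfl)⟩
          | succ j'' => exact hg j''
      · rw [Fin.sum_cons, Fin.sum_cons, hsum]
        abel

lemma single_mem_Lset {d kk : ℕ} (hk : 2 ≤ kk) (i : Fin d) :
    Pi.single i 1 ∈ Lset kk (stdZ0 d) ∧ (-Pi.single i 1 : Fin d → ℤ) ∈ Lset kk (stdZ0 d) := by
  obtain ⟨r, hr⟩ : ∃ r, kk - 1 = r + 1 := ⟨kk - 2, by omega⟩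
  obtain ⟨f, hf, hsum⟩ := aux_sum_single i r
  have hcast : ∀ (F : Fin (r + 1) → (Fin d → ℤ)),
      (∑ j : Fin (kk - 1), F (Fin.cast hr j)) = ∑ j : Fin (r + 1), F j := by
    intro F
    exact Fintype.sum_equiv (finCongr hr) _ _ (fun _ => rfl)
  constructor
  · exact ⟨fun j => f (Fin.cast hr j), fun j => hf _, by rw [hcast f, hsum]⟩
  · refine ⟨fun j => -f (Fin.cast hr j), fun j => ?_, ?_⟩
    · obtain ⟨i', h⟩ := hf (Fin.cast hr j)
      rcases h with h | h | h | h
      · exact ⟨i', Or.inr (Or.inl (by show -f (Fin.cast hr j) = _; rw [h]))⟩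
      · exact ⟨i', Or.inl (by show -f (Fin.cast hr j) = _; rw [h, neg_neg])⟩
      · exact ⟨i', Or.inr (Or.inr (Or.inr (by show -f (Fin.cast hr j) = _; rw [h])))⟩
      · exact ⟨i', Or.inr (Or.inr (Or.inl (by show -f (Fin.cast hr j) = _; rw [h, neg_neg])))⟩
    · rw [show (∑ j : Fin (kk-1), -f (Fin.cast hr j))
          = -∑ j : Fin (kk-1), f (Fin.cast hr j) by rw [Finset.sum_neg_distrib],
        hcast f, hsum]

lemma stdZ0_nonzero {d : ℕ} {x : Fin d → ℤ} (hx : x ∈ stdZ0 d) : x ≠ 0 := by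
  obtain ⟨i, h⟩ := hx
  have key : ∀ (c : ℤ), c ≠ 0 → (Pi.single i c : Fin d → ℤ) ≠ 0 := by
    intro c hc h0
    have := congrFun h0 i
    rw [Pi.single_eq_same] at this
    exact hc this
  rcases h with h | h | h | h <;> rw [h]
  · exact key 1 one_ne_zero
  · exact neg_ne_zero.mpr (key 1 one_ne_zero)
  · exact key 2 two_ne_zero
  · exact neg_ne_zero.mpr (key 2 two_ne_zero)

lemma Zn_subset_nonzero {d kk : ℕ} (ck : Fin d → ℝ) :
    ∀ n : ℕ, ∀ x ∈ Zn kk ck (stdZ0 d) n, x ≠ 0 := by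
  intro n
  cases n with
  | zero => exact fun x hx => stdZ0_nonzero hx
  | succ n =>
    rintro x ⟨κ, _, l, _, rfl, hpair⟩ h0
    apply hpair
    rw [h0]
    simp [pairing]

lemma walk_mem_Zn {d kk : ℕ} (hk : 2 ≤ kk) (ck : Fin d → ℝ)
    (hker : ∀ x : Fin d → ℤ, x ≠ 0 → pairing ck x ≠ 0) :
    ∀ N : ℕ, ∀ k : Fin d → ℤ, (∑ i, (k i).natAbs) = N → k ≠ 0 →
      ∃ n, k ∈ Zn kk ck (stdZ0 d) n := by
  intro N
  induction N using Nat.strong_induction_on with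
  | _ N ih =>
    intro k hN hk0
    obtain ⟨j, hjj⟩ := Function.ne_iff.mp hk0
    have hj : k j ≠ 0 := by simpa using hjj
    have hj' : (k j).natAbs ≠ 0 := fun h => hj (by omega)
    have hsplitk : (∑ i, (k i).natAbs)
        = (k j).natAbs + ∑ i ∈ Finset.univ \ {j}, (k i).natAbs :=
      Finset.sum_eq_add_sum_sdiff_singleton_of_mem (Finset.mem_univ j) _
    by_cases hN1 : N = 1
    · -- base case : k = ± ς_j
      subst hN1
      have hrest : ∀ i, i ≠ j → k i = 0 := by
        intro i hij
        have h0 : ∑ i ∈ Finset.univ \ {j}, (k i).natAbs = 0 := by omega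
        have := (Finset.sum_eq_zero_iff).mp h0 i (by simp [hij])
        omega
      have habs : (k j).natAbs = 1 := by omega
      have hkform : k = Pi.single j (k j) := by
        funext i
        by_cases hij : i = j
        · subst hij; rw [Pi.single_eq_same]
        · rw [Pi.single_eq_of_ne hij, hrest i hij]
      refine ⟨0, ?_⟩
      show k ∈ stdZ0 d
      rcases (by omega : k j = 1 ∨ k j = -1) with h | h
      · exact ⟨j, Or.inl (by rw [hkform, h])⟩
      · refine ⟨j, Or.inr (Or.inl ?_)⟩
        rw [hkform, h]
        funext i
        by_cases hij : i = j
        · subst hij; simp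
        · simp [Pi.single_eq_of_ne hij]
    · -- inductive step
      have hN2 : 2 ≤ N := by omega
      obtain ⟨s, hs, habs⟩ : ∃ s : ℤ, (s = 1 ∨ s = -1) ∧
          (k j - s).natAbs + 1 = (k j).natAbs := by
        rcases lt_trichotomy (k j) 0 with h | h | h
        · exact ⟨-1, Or.inr rfl, by omega⟩
        · exact absurd h hj
        · exact ⟨1, Or.inl rfl, by omega⟩
      set k' : Fin d → ℤ := Function.update k j (k j - s) with hk'
      have hk'j : k' j = k j - s := Function.update_self j _ k
      have hk'i : ∀ i, i ≠ j → k' i = k i := fun i hij => Function.update_of_ne hij _ k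
      have hsplitk' : (∑ i, (k' i).natAbs)
          = (k' j).natAbs + ∑ i ∈ Finset.univ \ {j}, (k' i).natAbs :=
        Finset.sum_eq_add_sum_sdiff_singleton_of_mem (Finset.mem_univ j) _
      have hsame : ∑ i ∈ Finset.univ \ {j}, (k' i).natAbs
          = ∑ i ∈ Finset.univ \ {j}, (k i).natAbs := by
        refine Finset.sum_congr rfl fun i hi => ?_
        rw [hk'i i (by simp at hi; exact hi)]
      have hsum' : (∑ i, (k' i).natAbs) = N - 1 := by
        rw [hsplitk', hsame, hk'j]
        omega
      have hk'0 : k' ≠ 0 := by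
        intro h0
        have : (∑ i, (k' i).natAbs) = 0 := by
          rw [h0]; simp
        omega
      obtain ⟨n, hn⟩ := ih (N - 1) (by omega) k' hsum' hk'0
      refine ⟨n + 1, k', hn, Pi.single j s, ?_, ?_, hker k hk0⟩
      · rcases hs with rfl | rfl
        · exact (single_mem_Lset hk j).1
        · have : (Pi.single j (-1 : ℤ) : Fin d → ℤ) = -Pi.single j 1 := by
            funext i
            by_cases hij : i = j
            · subst hij; simp
            · simp [Pi.single_eq_of_ne hij]
          rw [this]
          exact (single_mem_Lset hk j).2
      · funext i
        simp only [Pi.add_apply]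
        by_cases hij : i = j
        · subst hij
          rw [hk'j, Pi.single_eq_same]
          ring
        · rw [hk'i i hij, Pi.single_eq_of_ne hij]
          ring

/-- Example 1.8, conclusion: if `𝒵₀ = {ς_i, −ς_i, 2ς_i, −2ς_i}` and
`c_𝕜 = (√n₁, …, √n_d)` with `n₁, …, n_d` pairwise distinct squarefree positive
integers (the vectors `c_1, …, c_{𝕜−1}` being arbitrary), then `𝒵_∞ = ℤ^d \ {0}`
and in particular the Hörmander-type condition `ℤ^d \ 𝒵_∞ ⊆ A^⊥` holds. -/
theorem statement9 {d kk : ℕ} (hd : 1 ≤ d) (hk : 2 ≤ kk)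
    (c : ℕ → Fin d → ℝ) (n : Fin d → ℕ)
    (hpos : ∀ i, 0 < n i) (hsf : ∀ i, Squarefree (n i))
    (hdist : Function.Injective n)
    (hck : c kk = fun i => Real.sqrt (n i))
    (Z0 : Set (Fin d → ℤ)) (hZ0 : Z0 = stdZ0 d) :
    Zinf kk (c kk) Z0 = {k : Fin d → ℤ | k ≠ 0} ∧
    ∀ k : Fin d → ℤ, k ∉ Zinf kk (c kk) Z0 → k ∈ Aperp kk c := by
  have hker : ∀ x : Fin d → ℤ, x ≠ 0 → pairing (c kk) x ≠ 0 := by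
    intro x hx
    rw [hck]
    have := sqrt_comb_ne_zero n hpos hsf hdist x hx
    simpa [pairing] using this
  subst hZ0
  have hmain : Zinf kk (c kk) (stdZ0 d) = {k : Fin d → ℤ | k ≠ 0} := by
    ext k
    simp only [Zinf, Set.mem_iUnion, Set.mem_setOf_eq]
    constructor
    · rintro ⟨n', hn'⟩
      exact Zn_subset_nonzero (c kk) n' k hn'
    · intro hk0
      exact walk_mem_Zn hk (c kk) hker _ k rfl hk0
  refine ⟨hmain, ?_⟩
  intro k hkZ
  have hk0 : k = 0 := by
    have : k ∉ {k : Fin d → ℤ | k ≠ 0} := hmain ▸ hkZ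
    simpa using this
  subst hk0
  intro j _ _
  simp [pairing]
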